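/- In the setting of the minimal norm digit set theorem: let Λ, Φ, ‖·‖, V, D be as there with ‖Φ^{−1}‖^w < 1/2. Let P := {β ∈ Λ : β ∉ Φ(Λ) and (T^k(β))_{k≥0} is purely periodic}, where T(β) = Φ^{−1}(β − d(β)). If α ∈ P maximizes ‖Φ^{−w}(α)‖ over P, with period ℓ > 0 (T^ℓ(α) = α) and digits η_k = d(T^k(α)) whose non-zero positions form a set N ⊆ {0,…,ℓ−1} with all pairwise gaps at least w, then Φ^{−w}(α) = (id − Φ^{−ℓ})^{−1}(−∑_{k∈N, k<ℓ} Φ^{k−ℓ}(Φ^{−w}(η_k))), and for each k ∈ N one has ‖Φ^{−w}(η_k)‖ ≤ ‖Φ^{−w}(T^k(α))‖ ≤ ‖Φ^{−w}(α)‖. -/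

import Mathlib

/-- In the proof of Theorem 5.2: for a maximiser `α` of `‖Φ^{-w}(·)‖` on the
set `P` of purely periodic points not in `Φ(Λ)`, with period `ℓ` and non-zero
digit positions `N`, one has
`(id - Φ^{-ℓ})(Φ^{-w} α) = -∑_{k ∈ N} Φ^{k-ℓ}(Φ^{-w} η_k)` and
`‖Φ^{-w} η_k‖ ≤ ‖Φ^{-w} T^k(α)‖ ≤ ‖Φ^{-w} α‖` for all `k ∈ N`. -/
theorem minimal_norm_periodic_orbit_identity
    {E : Type*} [NormedAddCommGroup E] [NormedSpace ℝ E] [FiniteDimensional ℝ E]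
    {n : ℕ} (b : Module.Basis (Fin n) ℝ E)
    (Λ : Set E) (hΛ : Λ = ↑(Submodule.span ℤ (Set.range ⇑b)))
    (Φ : E ≃ₗ[ℝ] E) (hΦΛ : ∀ x ∈ Λ, Φ x ∈ Λ)
    (q : ℝ) (hq : q = ‖LinearMap.toContinuousLinearMap (Φ.symm : E →ₗ[ℝ] E)‖)
    (w : ℕ) (hw : 1 ≤ w) (hq1 : q ^ w < 1 / 2)
    (V : Set E) (hV : V = {z : E | ∀ α ∈ Λ, ‖z‖ ≤ ‖z + α‖})
    (Dbul : Set E)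
    (hDV : Dbul ⊆ {α ∈ Λ | (Φ ^ w).symm α ∈ V})
    (hDnot : ∀ δ ∈ Dbul, δ ∉ ⇑Φ '' Λ)
    (hDrep : ∀ α ∈ Λ, α ∉ ⇑Φ '' Λ →
      ∃! δ, δ ∈ Dbul ∧ α - δ ∈ ⇑(Φ ^ w) '' Λ)
    (d T : E → E)
    (hd0 : ∀ α ∈ Λ, α ∈ ⇑Φ '' Λ → d α = 0)
    (hd : ∀ α ∈ Λ, α ∉ ⇑Φ '' Λ → d α ∈ Dbul ∧ α - d α ∈ ⇑(Φ ^ w) '' Λ)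
    (hT : ∀ α : E, Φ (T α) = α - d α)
    (hTΛ : ∀ α ∈ Λ, T α ∈ Λ)
    (P : Set E)
    (hP : P = {β ∈ Λ | β ∉ ⇑Φ '' Λ ∧ ∃ p : ℕ, 0 < p ∧ T^[p] β = β})
    (α : E) (hα : α ∈ P)
    (hαmax : ∀ β ∈ P, ‖(Φ ^ (-(w : ℤ))) β‖ ≤ ‖(Φ ^ (-(w : ℤ))) α‖)
    (ℓ : ℕ) (hℓ : 0 < ℓ) (hTℓ : T^[ℓ] α = α)
    (N : Finset ℕ) (hN : ∀ k : ℕ, k ∈ N ↔ k < ℓ ∧ d (T^[k] α) ≠ 0)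
    (hNgap : ∀ k ∈ N, ∀ k' ∈ N, k < k' → k + w ≤ k') :
    ((Φ ^ (-(w : ℤ))) α - (Φ ^ (-(ℓ : ℤ))) ((Φ ^ (-(w : ℤ))) α)
        = -∑ k ∈ N, (Φ ^ ((k : ℤ) - (ℓ : ℤ))) ((Φ ^ (-(w : ℤ))) (d (T^[k] α)))) ∧
      (∀ k ∈ N,
        ‖(Φ ^ (-(w : ℤ))) (d (T^[k] α))‖ ≤ ‖(Φ ^ (-(w : ℤ))) (T^[k] α)‖ ∧
        ‖(Φ ^ (-(w : ℤ))) (T^[k] α)‖ ≤ ‖(Φ ^ (-(w : ℤ))) α‖) := by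
  classical
  have hcomp : ∀ (a b : ℤ) (x : E), (Φ ^ a) ((Φ ^ b) x) = (Φ ^ (a + b)) x := by
    intro a b x
    rw [zpow_add]
    rfl
  have symm_app : ∀ x : E, Φ.symm x = (Φ ^ (-1 : ℤ)) x := by
    intro x
    rw [zpow_neg_one]
    rfl
  have e1 : ∀ (z : ℤ) (x : E), Φ.symm ((Φ ^ z) x) = (Φ ^ (z - 1)) x := by
    intro z x
    rw [symm_app, hcomp]
    congr 1
    ring
  -- basic facts about α
  rw [hP] at hα
  obtain ⟨hαΛ, hαnot, -⟩ := hα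
  have hiterΛ : ∀ k : ℕ, T^[k] α ∈ Λ := by
    intro k
    induction k with
    | zero => simpa using hαΛ
    | succ k ih => rw [Function.iterate_succ_apply']; exact hTΛ _ ih
  have hTdef : ∀ β : E, T β = Φ.symm β - Φ.symm (d β) := by
    intro β
    have h2 : Φ.symm (Φ (T β)) = Φ.symm (β - d β) := by rw [hT]
    simpa [map_sub] using h2
  -- the key orbit expansion
  have key : ∀ m : ℕ, T^[m] α = (Φ ^ (-(m : ℤ))) α
      - ∑ k ∈ Finset.range m, (Φ ^ ((k : ℤ) - (m : ℤ))) (d (T^[k] α)) := by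
    intro m
    induction m with
    | zero => simp
    | succ m ih =>
      rw [Function.iterate_succ_apply', hTdef, Finset.sum_range_succ, ih,
        map_sub, map_sum]
      simp only [e1]
      have h1 : -(m : ℤ) - 1 = -((m + 1 : ℕ) : ℤ) := by push_cast; ring
      have h2 : ∀ k : ℕ, (k : ℤ) - (m : ℤ) - 1 = (k : ℤ) - ((m + 1 : ℕ) : ℤ) := by
        intro k; push_cast; ring
      have h3 : (Φ ^ ((m : ℤ) - ((m + 1 : ℕ) : ℤ)))
          (d ((Φ ^ (-(m : ℤ))) α - ∑ k ∈ Finset.range m,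
            (Φ ^ ((k : ℤ) - (m : ℤ))) (d (T^[k] α))))
          = Φ.symm (d ((Φ ^ (-(m : ℤ))) α - ∑ k ∈ Finset.range m,
            (Φ ^ ((k : ℤ) - (m : ℤ))) (d (T^[k] α)))) := by
      
        rw [symm_app]
        congr 1
        push_cast
        ring
      rw [h3, h1]
      simp only [h2]
      abel
  -- Part 1
  have hsum_eq2 : ∑ k ∈ Finset.range ℓ, (Φ ^ ((k : ℤ) - (ℓ : ℤ))) ((Φ ^ (-(w : ℤ))) (d (T^[k] α)))
      = ∑ k ∈ N, (Φ ^ ((k : ℤ) - (ℓ : ℤ))) ((Φ ^ (-(w : ℤ))) (d (T^[k] α))) := by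
    refine (Finset.sum_subset ?_ ?_).symm
    · intro k hk
      exact Finset.mem_range.2 ((hN k).1 hk).1
    · intro k hk hk'
      have hd0' : d (T^[k] α) = 0 := by
        by_contra h
        exact hk' ((hN k).2 ⟨Finset.mem_range.1 hk, h⟩)
      rw [hd0', map_zero, map_zero]
  have keyℓ := key ℓ
  rw [hTℓ] at keyℓ
  constructor
  · -- apply Φ^{-w} to keyℓ and rearrange
    have happ : (Φ ^ (-(w : ℤ))) α
        = (Φ ^ (-(w : ℤ))) ((Φ ^ (-(ℓ : ℤ))) α)
          - ∑ k ∈ Finset.range ℓ, (Φ ^ (-(w : ℤ))) ((Φ ^ ((k : ℤ) - (ℓ : ℤ))) (d (T^[k] α))) := by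
      conv_lhs => rw [keyℓ]
      rw [map_sub, map_sum]
    have hcomm : ∀ (z : ℤ) (x : E),
        (Φ ^ (-(w : ℤ))) ((Φ ^ z) x) = (Φ ^ z) ((Φ ^ (-(w : ℤ))) x) := by
      intro z x
      rw [hcomp, hcomp, add_comm]
    rw [hcomm, Finset.sum_congr rfl (fun k _ => hcomm _ _)] at happ
    rw [hsum_eq2] at happ
    rw [sub_eq_iff_eq_add]
    exact happ.trans (by abel)
  · -- Part 2
    intro k hk
    obtain ⟨hkℓ, hdk⟩ := (hN k).1 hk
    set β := T^[k] α with hβ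
    have hβΛ : β ∈ Λ := hiterΛ k
    have hβnot : β ∉ ⇑Φ '' Λ := fun h => hdk (hd0 β hβΛ h)
    have hβper : T^[ℓ] β = β := by
      rw [hβ, ← Function.iterate_add_apply, add_comm, Function.iterate_add_apply, hTℓ]
    have hβP : β ∈ P := by
      rw [hP]
      exact ⟨hβΛ, hβnot, ℓ, hℓ, hβper⟩
    refine ⟨?_, hαmax β hβP⟩
    -- first inequality
    obtain ⟨hdD, hdrem⟩ := hd β hβΛ hβnot
    obtain ⟨hdΛ, hdV⟩ := hDV hdD
    obtain ⟨γ, hγΛ, hγ⟩ := hdrem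
    have hpow : ∀ x : E, (Φ ^ (-(w : ℤ))) x = (Φ ^ w).symm x := by
      intro x
      rw [zpow_neg, zpow_natCast]
      rfl
    have hzinv : (Φ ^ (-(w : ℤ))) ((Φ ^ w) γ) = γ := by
      rw [hpow]
      exact (Φ ^ w).symm_apply_apply γ
    have hsplit : (Φ ^ (-(w : ℤ))) β = (Φ ^ (-(w : ℤ))) (d β) + γ := by
      have h := congrArg (Φ ^ (-(w : ℤ))) hγ
      rw [hzinv, map_sub] at h
      rw [h]
      abel
    rw [hV] at hdV
    have hineq := hdV ((Φ ^ w).symm (d β)) 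
    rw [← hpow] at hdV
    have := hdV γ hγΛ
    rw [← hsplit] at this
    exact this
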